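/- Let 1 < α < 2, let m ≥ 2, let y be a real polynomial of degree at most m with y(0) = y(1) = 0, and let x_0, …, x_{m−2} be m−1 pairwise distinct points in the open interval (0,1). If the Caputo derivative ᶜD^α y(x_i) = (1/Γ(2−α)) ∫₀^{x_i} (x_i − r)^{1−α} y''(r) dr equals 0 for every i = 0, …, m−2, then y is the zero polynomial. -/

import Mathlib

open MeasureTheory Polynomial intervalIntegral

lemma aux_integrable {α : ℝ} (hα2 : α < 2) {x : ℝ} (hx : 0 < x) (k : ℕ) :
    IntervalIntegrable (fun r => (x - r) ^ (1 - α) * r ^ k) volume 0 x := by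
  have h1 : IntervalIntegrable (fun r : ℝ => r ^ (1 - α)) volume 0 x :=
    intervalIntegral.intervalIntegrable_rpow' (by linarith)
  have h2 := (h1.comp_sub_left x).symm
  simp only [sub_zero, sub_self] at h2
  exact h2.mul_continuousOn (by fun_prop)

lemma aux_c_pos {α : ℝ} (hα1 : 1 < α) (hα2 : α < 2) (k : ℕ) :
    0 < ∫ s in (0:ℝ)..1, (1 - s) ^ (1 - α) * s ^ k := by
  apply intervalIntegral.intervalIntegral_pos_of_pos_on
  · have := aux_integrable (x := (1:ℝ)) hα2 one_pos k
    exact this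
  · intro s hs
    exact mul_pos (Real.rpow_pos_of_pos (by linarith [hs.2]) _)
      (pow_pos hs.1 k)
  · exact one_pos

lemma aux_scale {α : ℝ} (hα1 : 1 < α) (hα2 : α < 2) {x : ℝ} (hx : 0 < x) (k : ℕ) :
    ∫ r in (0:ℝ)..x, (x - r) ^ (1 - α) * r ^ k
      = x ^ (2 - α) * (x ^ k * ∫ s in (0:ℝ)..1, (1 - s) ^ (1 - α) * s ^ k) := by
  have hcomp := intervalIntegral.integral_comp_mul_left
    (a := (0:ℝ)) (b := 1) (fun r => (x - r) ^ (1 - α) * r ^ k) (ne_of_gt hx)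
  simp only [mul_zero, mul_one, smul_eq_mul] at hcomp
  have hcongr : (∫ s in (0:ℝ)..1, (x - x * s) ^ (1 - α) * (x * s) ^ k)
      = x ^ (1 - α) * x ^ k * ∫ s in (0:ℝ)..1, (1 - s) ^ (1 - α) * s ^ k := by
    rw [← intervalIntegral.integral_const_mul]
    apply intervalIntegral.integral_congr
    intro s hs
    rw [Set.uIcc_of_le (by norm_num)] at hs
    have h1s : (0:ℝ) ≤ 1 - s := by linarith [hs.2]
    simp only
    rw [show x - x * s = x * (1 - s) by ring, Real.mul_rpow hx.le h1s, mul_pow]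
    ring
  rw [hcongr] at hcomp
  have hx1 : x * x ^ (1 - α) = x ^ (2 - α) := by
    nth_rewrite 1 [← Real.rpow_one x]
    rw [← Real.rpow_add hx]
    ring_nf
  have hI : (∫ r in (0:ℝ)..x, (x - r) ^ (1 - α) * r ^ k)
      = x * (x ^ (1 - α) * x ^ k * ∫ s in (0:ℝ)..1, (1 - s) ^ (1 - α) * s ^ k) := by
    rw [hcomp]
    field_simp
  rw [hI, ← hx1]
  ring


/-- Let `1 < α < 2`, `m ≥ 2`, let `y` be a real polynomial of degree at
most `m` with `y(0) = y(1) = 0`, and let `x_0, …, x_{m−2}` be `m−1` pairwise distinct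
points in `(0,1)`. If the Caputo derivative
`ᶜD^α y(x_i) = (1/Γ(2−α)) ∫₀^{x_i} (x_i − r)^{1−α} y''(r) dr` vanishes for every `i`,
then `y = 0`. -/
theorem stmt_7 (α : ℝ) (hα1 : 1 < α) (hα2 : α < 2)
    (m : ℕ) (hm : 2 ≤ m) (y : Polynomial ℝ)
    (hdeg : y.natDegree ≤ m) (h0 : y.eval 0 = 0) (h1 : y.eval 1 = 0)
    (x : Fin (m - 1) → ℝ) (hinj : Function.Injective x)
    (hmem : ∀ i, x i ∈ Set.Ioo (0:ℝ) 1)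
    (hzero : ∀ i, (1 / Real.Gamma (2 - α)) *
      (∫ r in (0:ℝ)..(x i), (x i - r) ^ (1 - α) *
        (Polynomial.derivative (Polynomial.derivative y)).eval r) = 0) :
    y = 0 := by
  set D := Polynomial.derivative (Polynomial.derivative y) with hD
  set c : ℕ → ℝ := fun k => ∫ s in (0:ℝ)..1, (1 - s) ^ (1 - α) * s ^ k with hc
  have hcpos : ∀ k, 0 < c k := fun k => aux_c_pos hα1 hα2 k
  have hDdeg : D.natDegree < m - 1 := by
    have h1' : D.natDegree ≤ (Polynomial.derivative y).natDegree - 1 :=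
      Polynomial.natDegree_derivative_le _
    have h2' : (Polynomial.derivative y).natDegree ≤ y.natDegree - 1 :=
      Polynomial.natDegree_derivative_le _
    omega
  set q : Polynomial ℝ := ∑ k ∈ Finset.range (m - 1),
    Polynomial.C (D.coeff k * c k) * Polynomial.X ^ k with hq
  have hqeval : ∀ t : ℝ, q.eval t = ∑ k ∈ Finset.range (m - 1), D.coeff k * c k * t ^ k := by
    intro t
    simp [hq, Polynomial.eval_finset_sum]
  have hGamma : Real.Gamma (2 - α) ≠ 0 :=
    ne_of_gt (Real.Gamma_pos_of_pos (by linarith))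
  have hqroot : ∀ i, q.eval (x i) = 0 := by
    intro i
    obtain ⟨hx0, hx1⟩ := hmem i
    have hz := hzero i
    have hint : (∫ r in (0:ℝ)..(x i), (x i - r) ^ (1 - α) * D.eval r) = 0 := by
      field_simp at hz
      rwa [mul_zero] at hz
    have hsplit : (∫ r in (0:ℝ)..(x i), (x i - r) ^ (1 - α) * D.eval r)
        = ∑ k ∈ Finset.range (m - 1),
            D.coeff k * ∫ r in (0:ℝ)..(x i), (x i - r) ^ (1 - α) * r ^ k := by
      rw [intervalIntegral.integral_congr (g := fun r => ∑ k ∈ Finset.range (m - 1),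
        D.coeff k * ((x i - r) ^ (1 - α) * r ^ k)) ?_]
      · rw [intervalIntegral.integral_finset_sum
          (fun k _ => (aux_integrable hα2 hx0 k).const_mul _)]
        exact Finset.sum_congr rfl fun k _ => intervalIntegral.integral_const_mul _ _
      · intro r _
        simp only
        rw [Polynomial.eval_eq_sum_range' hDdeg r, Finset.mul_sum]
        exact Finset.sum_congr rfl fun k _ => by ring
    rw [hsplit] at hint
    have hfac : ∑ k ∈ Finset.range (m - 1),
        D.coeff k * ∫ r in (0:ℝ)..(x i), (x i - r) ^ (1 - α) * r ^ k
        = x i ^ (2 - α) * q.eval (x i) := by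
      rw [hqeval, Finset.mul_sum]
      refine Finset.sum_congr rfl fun k _ => ?_
      rw [aux_scale hα1 hα2 hx0 k]
      ring
    rw [hfac] at hint
    rcases mul_eq_zero.mp hint with h | h
    · exact absurd h (ne_of_gt (Real.rpow_pos_of_pos hx0 _))
    · exact h
  have hqdeg : q.natDegree < m - 1 := by
    have : q.natDegree ≤ m - 2 := by
      refine Polynomial.natDegree_sum_le_of_forall_le _ _ fun k hk => ?_
      refine le_trans (Polynomial.natDegree_C_mul_le _ _) ?_
      rw [Polynomial.natDegree_X_pow]
      have := Finset.mem_range.mp hk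
      omega
    omega
  have hq0 : q = 0 :=
    Polynomial.eq_zero_of_natDegree_lt_card_of_eval_eq_zero q hinj hqroot (by simpa using hqdeg)
  have hDcoeff : ∀ k, D.coeff k = 0 := by
    intro k
    by_cases hk : k < m - 1
    · have hco : q.coeff k = D.coeff k * c k := by
        simp [hq, Polynomial.finset_sum_coeff, mul_assoc, Polynomial.coeff_C_mul,
          Polynomial.coeff_X_pow, mul_ite, Finset.sum_ite_eq', Finset.mem_range, hk]
      rw [hq0, Polynomial.coeff_zero] at hco
      rcases mul_eq_zero.mp hco.symm with h | h
      · exact h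
      · exact absurd h (ne_of_gt (hcpos k))
    · exact Polynomial.coeff_eq_zero_of_natDegree_lt (by omega)
  have hycoeff : ∀ n : ℕ, y.coeff (n + 2) = 0 := by
    intro n
    have hd := hDcoeff n
    rw [hD, Polynomial.coeff_derivative, Polynomial.coeff_derivative] at hd
    push_cast at hd
    have h1' : ((n:ℝ) + 1 + 1) ≠ 0 := by positivity
    have h2' : ((n:ℝ) + 1) ≠ 0 := by positivity
    have := mul_eq_zero.mp hd
    rcases this with h | h
    · rcases mul_eq_zero.mp h with h' | h'
      · simpa using h'
      · exact absurd h' h1'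
    · exact absurd h h2'
  have hydeg : y.natDegree ≤ 1 := by
    rw [Polynomial.natDegree_le_iff_coeff_eq_zero]
    intro N hN
    obtain ⟨n, rfl⟩ : ∃ n, N = n + 2 := ⟨N - 2, by omega⟩
    exact hycoeff n
  have hc0 : y.coeff 0 = 0 := by rw [Polynomial.coeff_zero_eq_eval_zero]; exact h0
  have hc1 : y.coeff 1 = 0 := by
    have := Polynomial.eval_eq_sum_range' (lt_of_le_of_lt hydeg one_lt_two) (1:ℝ)
    rw [h1] at this
    rw [show (2:ℕ) = 1 + 1 from rfl, Finset.sum_range_succ, Finset.sum_range_one] at this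
    simp [hc0] at this
    linarith
  ext n
  match n with
  | 0 => simpa using hc0
  | 1 => simpa using hc1
  | (n + 2) => simpa using hycoeff n
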